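/- arXiv:0907.0509 — 2 statements merged into one kernel-verified Lean document; each statement's English description precedes it below -/
import Mathlib

section
/- Let (Ω, G, Q) be a probability space, G_{j-1} ⊆ G_j ⊆ G sub-σ-fields, δ > 0, A ≥ 0, X an integrable random variable, and X_j an integrable random variable with E[X_j | G_{j-1}] = E[X_j | G_j] a.s. and E[e^{δ|X − X_j|} | G_{j-1}] ≤ A a.s. Set D_j = E[X | G_j] − E[X | G_{j-1}]. Then E[e^{δ|D_j|} | G_{j-1}] ≤ A² almost surely. -/
open MeasureTheory Filter

-- auxiliary: conditional abs bound
lemma my_abs_condExp_le {Ω : Type*} {m m0 : MeasurableSpace Ω} {μ : Measure Ω}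
    (f : Ω → ℝ) (hf : Integrable f μ) :
    (fun ω => |(μ[f|m]) ω|) ≤ᵐ[μ] μ[(fun ω => |f ω|)|m] := by
  filter_upwards [condExp_mono hf hf.abs
      (Eventually.of_forall fun x => le_abs_self (f x)),
    ((condExp_neg (m := m) f).symm.le.trans
      (condExp_mono hf.neg hf.abs
        (Eventually.of_forall fun x => neg_le_abs (f x))))] with x hx₁ hx₂
  simp only [Pi.neg_apply] at hx₂
  exact abs_le.2 ⟨by linarith, hx₁⟩

-- auxiliary: conditional Jensen for exp
lemma my_condExp_exp_le {Ω : Type*} {m m0 : MeasurableSpace Ω} (hm : m ≤ m0)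
    {μ : Measure Ω} [IsProbabilityMeasure μ]
    (f : Ω → ℝ) (hf : Integrable f μ)
    (hef : Integrable (fun ω => Real.exp (f ω)) μ) :
    (fun ω => Real.exp ((μ[f|m]) ω)) ≤ᵐ[μ] μ[fun ω => Real.exp (f ω)|m] := by
  have key : ∀ q : ℚ, (fun ω => Real.exp q * (μ[f|m]) ω + Real.exp q * (1 - q))
      ≤ᵐ[μ] μ[fun ω => Real.exp (f ω)|m] := by
    intro q
    have hint : Integrable (fun ω => Real.exp q * f ω + Real.exp q * (1 - q)) μ :=
      (hf.const_mul _).add (integrable_const _)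
    have hpt : (fun ω => Real.exp q * f ω + Real.exp q * (1 - q))
        ≤ᵐ[μ] fun ω => Real.exp (f ω) := by
      filter_upwards with ω
      have h1 : (f ω - q) + 1 ≤ Real.exp (f ω - q) := Real.add_one_le_exp _
      have h2 : Real.exp (f ω) = Real.exp (q : ℝ) * Real.exp (f ω - q) := by
        rw [← Real.exp_add]; ring_nf
      nlinarith [Real.exp_pos (q : ℝ)]
    have hmono := condExp_mono (m := m) hint hef hpt
    have heq : μ[fun ω => Real.exp q * f ω + Real.exp q * (1 - q)|m]
        =ᵐ[μ] fun ω => Real.exp q * (μ[f|m]) ω + Real.exp q * (1 - q) := by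
      have h3 : (fun ω => Real.exp q * f ω + Real.exp q * (1 - q))
          = (Real.exp q • f) + (fun _ => Real.exp q * (1 - q)) := by
        funext ω; simp [smul_eq_mul]
      rw [h3]
      refine (condExp_add (hf.smul _) (integrable_const _) m).trans ?_
      have h4 := condExp_smul (μ := μ) (m := m) (Real.exp q) f
      have h5 := condExp_const hm (Real.exp (q:ℝ) * (1 - (q:ℝ))) (μ := μ)
      filter_upwards [h4] with ω h4ω
      simp only [Pi.add_apply, h4ω, Pi.smul_apply, smul_eq_mul, h5]
    exact heq.symm.trans_le hmono
  have key' : ∀ᵐ ω ∂μ, ∀ q : ℚ,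
      Real.exp q * (μ[f|m]) ω + Real.exp q * (1 - q) ≤ (μ[fun ω => Real.exp (f ω)|m]) ω :=
    ae_all_iff.2 key
  filter_upwards [key'] with ω hω
  set G := (μ[f|m]) ω
  set H := (μ[fun ω => Real.exp (f ω)|m]) ω
  have hS : IsClosed {t : ℝ | Real.exp t * G + Real.exp t * (1 - t) ≤ H} :=
    isClosed_le (by fun_prop) continuous_const
  have hsub : Set.range ((↑) : ℚ → ℝ) ⊆ {t : ℝ | Real.exp t * G + Real.exp t * (1 - t) ≤ H} := by
    rintro _ ⟨q, rfl⟩; exact hω q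
  have hall : (Set.univ : Set ℝ) ⊆ {t : ℝ | Real.exp t * G + Real.exp t * (1 - t) ≤ H} := by
    rw [← Rat.denseRange_cast.closure_eq]
    exact hS.closure_subset_iff.2 hsub
  have h := hall (Set.mem_univ G)
  simp only [Set.mem_setOf_eq] at h
  have : Real.exp G * G + Real.exp G * (1 - G) = Real.exp G := by ring
  linarith

theorem condexp_exp_abs_martingale_diff {Ω : Type*} {m0 : MeasurableSpace Ω}
    (μ : Measure Ω) [IsProbabilityMeasure μ]
    (m1 m2 : MeasurableSpace Ω) (h12 : m1 ≤ m2) (h20 : m2 ≤ m0)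
    (δ : ℝ) (hδ : 0 < δ) (A : ℝ) (hA : 0 ≤ A)
    (X Xj : Ω → ℝ) (hX : Integrable X μ) (hXj : Integrable Xj μ)
    (hmart : μ[Xj|m1] =ᵐ[μ] μ[Xj|m2])
    (hexpint : Integrable (fun ω => Real.exp (δ * |X ω - Xj ω|)) μ)
    (hbound : μ[fun ω => Real.exp (δ * |X ω - Xj ω|)|m1] ≤ᵐ[μ] fun _ => A) :
    μ[fun ω => Real.exp (δ * |(μ[X|m2]) ω - (μ[X|m1]) ω|)|m1] ≤ᵐ[μ] fun _ => A ^ 2 := by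
  have h10 : m1 ≤ m0 := h12.trans h20
  set Y : Ω → ℝ := fun ω => X ω - Xj ω with hYdef
  have hY : Integrable Y μ := hX.sub hXj
  set g : Ω → ℝ := fun ω => δ * |Y ω| with hgdef
  have hg : Integrable g μ := hY.abs.const_mul δ
  set φ : Ω → ℝ := fun ω => Real.exp (δ * |Y ω|) with hφdef
  have hφ : Integrable φ μ := hexpint
  -- key estimate for a sub-σ-algebra m
  have main : ∀ (m : MeasurableSpace Ω), m ≤ m0 →
      (fun ω => Real.exp (δ * |(μ[Y|m]) ω|)) ≤ᵐ[μ] μ[φ|m] := by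
    intro m hm
    have hjen : (fun ω => Real.exp ((μ[g|m]) ω)) ≤ᵐ[μ] μ[fun ω => Real.exp (g ω)|m] :=
      my_condExp_exp_le hm g hg (by simpa [hgdef, hφdef] using hφ)
    have habs : (fun ω => |(μ[Y|m]) ω|) ≤ᵐ[μ] μ[(fun ω => |Y ω|)|m] :=
      my_abs_condExp_le Y hY
    have hsmul : μ[g|m] =ᵐ[μ] δ • μ[(fun ω => |Y ω|)|m] := by
      have : g = δ • (fun ω => |Y ω|) := by funext ω; simp [hgdef, smul_eq_mul]
      rw [this]
      exact condExp_smul δ _ m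
    filter_upwards [hjen, habs, hsmul] with ω h1 h2 h3
    have : δ * |(μ[Y|m]) ω| ≤ (μ[g|m]) ω := by
      rw [h3]; simp only [Pi.smul_apply, smul_eq_mul]
      exact mul_le_mul_of_nonneg_left h2 hδ.le
    exact le_trans (Real.exp_le_exp.2 this) h1
  have hmain2 := main m2 h20
  have hmain1 := main m1 h10
  set U : Ω → ℝ := μ[φ|m2] with hUdef
  set V : Ω → ℝ := μ[φ|m1] with hVdef
  have hU0 : (0 : Ω → ℝ) ≤ᵐ[μ] U :=
    condExp_nonneg (Eventually.of_forall fun ω => (Real.exp_pos _).le)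
  -- decompose the martingale difference
  have hs2 : μ[Y|m2] =ᵐ[μ] μ[X|m2] - μ[Xj|m2] := condExp_sub hX hXj m2
  have hs1 : μ[Y|m1] =ᵐ[μ] μ[X|m1] - μ[Xj|m1] := condExp_sub hX hXj m1
  -- pointwise bound
  have hpt : (fun ω => Real.exp (δ * |(μ[X|m2]) ω - (μ[X|m1]) ω|)) ≤ᵐ[μ] fun ω => A * U ω := by
    filter_upwards [hmain2, hmain1, hs2, hs1, hmart, hbound, hU0] with ω h2 h1 e2 e1 em hb u0
    have hDeq : (μ[X|m2]) ω - (μ[X|m1]) ω = (μ[Y|m2]) ω - (μ[Y|m1]) ω := by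
      have e2' : (μ[Y|m2]) ω = (μ[X|m2]) ω - (μ[Xj|m2]) ω := by
        rw [e2]; simp
      have e1' : (μ[Y|m1]) ω = (μ[X|m1]) ω - (μ[Xj|m1]) ω := by
        rw [e1]; simp
      rw [e2', e1', em]; ring
    rw [hDeq]
    have htri : δ * |(μ[Y|m2]) ω - (μ[Y|m1]) ω| ≤ δ * |(μ[Y|m2]) ω| + δ * |(μ[Y|m1]) ω| := by
      have := abs_sub ((μ[Y|m2]) ω) ((μ[Y|m1]) ω)
      nlinarith [abs_sub_abs_le_abs_sub ((μ[Y|m2]) ω) ((μ[Y|m1]) ω),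
        abs_sub ((μ[Y|m2]) ω) ((μ[Y|m1]) ω)]
    calc Real.exp (δ * |(μ[Y|m2]) ω - (μ[Y|m1]) ω|)
        ≤ Real.exp (δ * |(μ[Y|m2]) ω| + δ * |(μ[Y|m1]) ω|) := Real.exp_le_exp.2 htri
      _ = Real.exp (δ * |(μ[Y|m2]) ω|) * Real.exp (δ * |(μ[Y|m1]) ω|) := Real.exp_add _ _
      _ ≤ U ω * V ω := by
          exact mul_le_mul h2 h1 (Real.exp_pos _).le
            (le_trans (Real.exp_pos _).le h2)
      _ ≤ A * U ω := by
          have u0' : (0:ℝ) ≤ U ω := u0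
          nlinarith
  -- integrability of the LHS
  have hmeas : StronglyMeasurable[m0] fun ω => Real.exp (δ * |(μ[X|m2]) ω - (μ[X|m1]) ω|) := by
    have hD : StronglyMeasurable[m0] (fun ω => (μ[X|m2]) ω - (μ[X|m1]) ω) :=
      (stronglyMeasurable_condExp.mono h20).sub (stronglyMeasurable_condExp.mono h10)
    exact (Real.continuous_exp.comp (continuous_const.mul continuous_abs)).comp_stronglyMeasurable hD
  have hAU : Integrable (fun ω => A * U ω) μ := integrable_condExp.const_mul A
  have hT : Integrable (fun ω => Real.exp (δ * |(μ[X|m2]) ω - (μ[X|m1]) ω|)) μ := by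
    refine hAU.mono' hmeas.aestronglyMeasurable ?_
    filter_upwards [hpt] with ω h
    simpa [Real.norm_eq_abs, abs_of_pos (Real.exp_pos _)] using h
  -- conclude
  have step1 := condExp_mono (m := m1) hT hAU hpt
  have step2 : μ[fun ω => A * U ω|m1] =ᵐ[μ] fun ω => A * V ω := by
    have : (fun ω => A * U ω) = A • U := by funext ω; simp [smul_eq_mul]
    rw [this]
    refine (condExp_smul A U m1).trans ?_
    have htow : μ[U|m1] =ᵐ[μ] V := condExp_condExp_of_le h12 h20
    filter_upwards [htow] with ω h
    simp [h]
  refine step1.trans (step2.trans_le ?_)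
  filter_upwards [hbound] with ω hb
  have : A * V ω ≤ A * A := mul_le_mul_of_nonneg_left hb hA
  simpa [sq] using this
end

section
/- Let (Ω, G, Q) be a probability space, G' ⊆ G a sub-σ-field, B > 0, δ > 0, and D a random variable with E[D | G'] = 0 a.s. and E[|D|²·e^{δ|D|/2} | G'] ≤ 2B a.s. Then for every α with |α| ≤ δ/2, E[e^{αD} | G'] ≤ e^{Bα²} almost surely. -/
open MeasureTheory Nat

lemma exp_le_one_add_add (x : ℝ) : Real.exp x ≤ 1 + x + x ^ 2 / 2 * Real.exp |x| := by
  have hexp : ∀ y : ℝ, Real.exp y = ∑' n : ℕ, y ^ n / (n ! : ℝ) := by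
    intro y
    rw [Real.exp_eq_exp_ℝ, NormedSpace.exp_eq_tsum_div]
  have hs : ∀ y : ℝ, Summable (fun n : ℕ => y ^ n / (n ! : ℝ)) := fun y =>
    Real.summable_pow_div_factorial y
  have key : Real.exp x - (1 + x) = ∑' n : ℕ, x ^ (n + 2) / ((n + 2)! : ℝ) := by
    have h := Summable.sum_add_tsum_nat_add (f := fun n : ℕ => x ^ n / (n ! : ℝ)) 2 (hs x)
    rw [hexp x, ← h]
    simp [Finset.sum_range_succ]
  have hterm : ∀ n : ℕ, x ^ (n + 2) / ((n + 2)! : ℝ) ≤ x ^ 2 / 2 * (|x| ^ n / (n ! : ℝ)) := by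
    intro n
    have h1 : x ^ (n + 2) ≤ |x| ^ (n + 2) := by
      calc x ^ (n + 2) ≤ |x ^ (n + 2)| := le_abs_self _
        _ = |x| ^ (n + 2) := abs_pow x (n + 2)
    have h2 : ((2 : ℝ) * n !) ≤ ((n + 2)! : ℝ) := by
      have : 2 * n ! ≤ (n + 2)! := by
        rw [Nat.factorial_succ, Nat.factorial_succ]
        calc 2 * n ! ≤ (n + 1 + 1) * n ! := Nat.mul_le_mul_right _ (by omega)
          _ ≤ (n + 1 + 1) * ((n + 1) * n !) :=
            Nat.mul_le_mul_left _ (Nat.le_mul_of_pos_left _ (by omega))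
      exact_mod_cast this
    have hfp : (0 : ℝ) < (n + 2)! := by positivity
    have hnp : (0 : ℝ) < 2 * n ! := by positivity
    calc x ^ (n + 2) / ((n + 2)! : ℝ) ≤ |x| ^ (n + 2) / ((n + 2)! : ℝ) :=
          div_le_div_of_nonneg_right h1 hfp.le
      _ ≤ |x| ^ (n + 2) / (2 * n !) := by
          apply div_le_div_of_nonneg_left (by positivity) hnp h2
      _ = x ^ 2 / 2 * (|x| ^ n / (n ! : ℝ)) := by
          rw [pow_add, ← sq_abs x]
          field_simp
  have hsum2 : Summable (fun n : ℕ => x ^ (n + 2) / ((n + 2)! : ℝ)) :=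
    (summable_nat_add_iff 2).2 (hs x)
  have hsum3 : Summable (fun n : ℕ => x ^ 2 / 2 * (|x| ^ n / (n ! : ℝ))) := (hs |x|).mul_left _
  have := Summable.tsum_le_tsum hterm hsum2 hsum3
  rw [tsum_mul_left, ← hexp |x|] at this
  linarith [key ▸ this]

theorem condexp_mgf_bound {Ω : Type*} {m0 : MeasurableSpace Ω}
    (μ : Measure Ω) [IsProbabilityMeasure μ]
    (m' : MeasurableSpace Ω) (hm' : m' ≤ m0)
    (B δ : ℝ) (hB : 0 < B) (hδ : 0 < δ)
    (D : Ω → ℝ) (hD : Integrable D μ)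
    (hcentered : μ[D|m'] =ᵐ[μ] fun _ => (0 : ℝ))
    (hint2 : Integrable (fun ω => |D ω| ^ 2 * Real.exp (δ * |D ω| / 2)) μ)
    (hbound : μ[fun ω => |D ω| ^ 2 * Real.exp (δ * |D ω| / 2)|m'] ≤ᵐ[μ] fun _ => 2 * B)
    (α : ℝ) (hα : |α| ≤ δ / 2)
    (hintα : Integrable (fun ω => Real.exp (α * D ω)) μ) :
    μ[fun ω => Real.exp (α * D ω)|m'] ≤ᵐ[μ] fun _ => Real.exp (B * α ^ 2) := by
  set g : Ω → ℝ := fun ω => |D ω| ^ 2 * Real.exp (δ * |D ω| / 2) with hg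
  set h : Ω → ℝ := fun ω => 1 + α * D ω + α ^ 2 / 2 * g ω with hh
  have hinth : Integrable h μ :=
    ((integrable_const 1).add (hD.const_mul α)).add (hint2.const_mul _)
  -- pointwise inequality
  have hpt : ∀ ω, Real.exp (α * D ω) ≤ h ω := by
    intro ω
    have h1 := exp_le_one_add_add (α * D ω)
    have h2 : (α * D ω) ^ 2 / 2 * Real.exp |α * D ω| ≤ α ^ 2 / 2 * g ω := by
      have hexple : Real.exp |α * D ω| ≤ Real.exp (δ * |D ω| / 2) := by
        apply Real.exp_le_exp.2
        rw [abs_mul]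
        calc |α| * |D ω| ≤ δ / 2 * |D ω| := by
              exact mul_le_mul_of_nonneg_right hα (abs_nonneg _)
          _ = δ * |D ω| / 2 := by ring
      calc (α * D ω) ^ 2 / 2 * Real.exp |α * D ω|
          ≤ (α * D ω) ^ 2 / 2 * Real.exp (δ * |D ω| / 2) := by
            apply mul_le_mul_of_nonneg_left hexple (by positivity)
        _ = α ^ 2 / 2 * g ω := by
            simp only [hg, mul_pow, ← sq_abs (D ω)]
            ring
    simp only [hh]
    nlinarith [h1, h2]
  -- condexp monotonicity
  have hmono : μ[fun ω => Real.exp (α * D ω)|m'] ≤ᵐ[μ] μ[h|m'] :=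
    condExp_mono hintα hinth (Filter.Eventually.of_forall hpt)
  -- compute condexp of h
  have hce : μ[h|m'] =ᵐ[μ] fun ω =>
      1 + α * (μ[D|m']) ω + α ^ 2 / 2 * (μ[g|m']) ω := by
    have e1 : μ[h|m'] =ᵐ[μ] μ[fun ω => 1 + α * D ω|m'] + μ[fun ω => α ^ 2 / 2 * g ω|m'] :=
      condExp_add ((integrable_const 1).add (hD.const_mul α)) (hint2.const_mul _) m'
    have e2 : μ[fun ω => 1 + α * D ω|m'] =ᵐ[μ]
        μ[fun _ => (1 : ℝ)|m'] + μ[fun ω => α * D ω|m'] :=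
      condExp_add (integrable_const 1) (hD.const_mul α) m'
    have e3 : μ[fun ω => α * D ω|m'] =ᵐ[μ] fun ω => α * (μ[D|m']) ω := by
      have := condExp_smul (μ := μ) (m := m') α D
      filter_upwards [this] with ω hω
      exact hω
    have e4 : μ[fun ω => α ^ 2 / 2 * g ω|m'] =ᵐ[μ] fun ω => α ^ 2 / 2 * (μ[g|m']) ω := by
      have := condExp_smul (μ := μ) (m := m') (α ^ 2 / 2) g
      filter_upwards [this] with ω hω
      exact hω
    filter_upwards [e1, e2.mono (fun ω hω => hω), e3, e4] with ω h1 h2 h3 h4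
    have e5' : (μ[fun _ => (1 : ℝ)|m']) = fun _ => (1 : ℝ) := condExp_const hm' 1
    simp only [Pi.add_apply] at h1 h2
    rw [h1, h2, h3, h4, e5']
  filter_upwards [hmono, hce, hcentered, hbound] with ω h1 h2 h3 h4
  rw [h2, h3] at h1
  have hle : 1 + α * 0 + α ^ 2 / 2 * (μ[g|m']) ω ≤ 1 + B * α ^ 2 := by
    have : α ^ 2 / 2 * (μ[g|m']) ω ≤ α ^ 2 / 2 * (2 * B) :=
      mul_le_mul_of_nonneg_left h4 (by positivity)
    nlinarith
  have := Real.add_one_le_exp (B * α ^ 2)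
  linarith [h1.trans hle]
end
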